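/- Let x_1 < x_2 < ... < x_m be real numbers with targets y_1, ..., y_m ∈ ℝ, let b_1 ≤ b_2 ≤ ... ≤ b_n (with convention b_{n+1} = +∞) and c_1, ..., c_n ∈ ℝ, and let f(x) = Σ_{i=1}^n c_i·max(x − b_i, 0). Suppose both families of stationarity conditions hold: for every 1 ≤ j ≤ n, Σ_{k=1}^m 𝟙[x_k > b_j]·(f(x_k) − y_k) = 0 and Σ_{k=1}^m max(x_k − b_j, 0)·(f(x_k) − y_k) = 0. Then for every 1 ≤ k ≤ n with u_k ≥ 2, Σ_{i=1}^k c_i = ((1/u_k)·Σ_{j ∈ U_k} x_j·y_j − μ_k·ȳ_k)/σ_k², i.e., the slope of the network on the cell (b_k, b_{k+1}] equals the least-squares slope of the data in that cell. -/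

import Mathlib

open scoped Classical

/-- at a stationary point, the slope of the network on each cell
with at least two data points equals the least-squares slope of the data in
that cell. -/
theorem stationarity_slope_leastSquares
    (m n : ℕ) (x y : Fin m → ℝ) (hx : StrictMono x)
    (b : Fin n → ℝ) (hb : Monotone b)
    (c : Fin n → ℝ)
    (f : ℝ → ℝ) (hf : ∀ t, f t = ∑ i, c i * max (t - b i) 0)
    (inCell : Fin n → Fin m → Prop)
    (hinCell : ∀ k j, inCell k j ↔
      (b k < x j ∧ ∀ h : (k : ℕ) + 1 < n, x j ≤ b ⟨(k : ℕ) + 1, h⟩))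
    (u : Fin n → ℕ)
    (hu : ∀ k, u k = (Finset.univ.filter (fun j => inCell k j)).card)
    (μ ybar σsq : Fin n → ℝ)
    (hμ : ∀ k, μ k =
      (∑ j ∈ Finset.univ.filter (fun j => inCell k j), x j) / (u k : ℝ))
    (hybar : ∀ k, ybar k =
      (∑ j ∈ Finset.univ.filter (fun j => inCell k j), y j) / (u k : ℝ))
    (hσsq : ∀ k, σsq k =
      (∑ j ∈ Finset.univ.filter (fun j => inCell k j), (x j) ^ 2) / (u k : ℝ) - (μ k) ^ 2)
    (hstat_b : ∀ j : Fin n,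
      ∑ k, (if b j < x k then (1 : ℝ) else 0) * (f (x k) - y k) = 0)
    (hstat_c : ∀ j : Fin n,
      ∑ k, max (x k - b j) 0 * (f (x k) - y k) = 0) :
    ∀ k : Fin n, 2 ≤ u k →
      (∑ i ∈ Finset.univ.filter (fun i : Fin n => i ≤ k), c i) =
        ((∑ j ∈ Finset.univ.filter (fun j => inCell k j), x j * y j) / (u k : ℝ)
          - μ k * ybar k) / σsq k := by
  intro k hk
  set C : Finset (Fin m) := Finset.univ.filter (fun j => inCell k j) with hC
  set r : Fin m → ℝ := fun j => f (x j) - y j with hr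
  -- half-line residual sums vanish
  have hP : ∀ i : Fin n,
      ∑ j ∈ Finset.univ.filter (fun j => b i < x j), r j = 0 := by
    intro i
    rw [← hstat_b i, Finset.sum_filter]
    refine Finset.sum_congr rfl fun j _ => ?_
    by_cases h : b i < x j <;> simp [h, hr]
  have hQ : ∀ i : Fin n,
      ∑ j ∈ Finset.univ.filter (fun j => b i < x j), x j * r j = 0 := by
    intro i
    have h1 : ∑ j ∈ Finset.univ.filter (fun j => b i < x j), (x j - b i) * r j = 0 := by
      rw [← hstat_c i, Finset.sum_filter]
      refine Finset.sum_congr rfl fun j _ => ?_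
      by_cases h : b i < x j
      · simp [h, hr, max_eq_left (sub_pos.mpr h).le]
      · simp [h, max_eq_right (sub_nonpos.mpr (not_lt.mp h))]
    have h2 : ∑ j ∈ Finset.univ.filter (fun j => b i < x j), x j * r j
        = (∑ j ∈ Finset.univ.filter (fun j => b i < x j), (x j - b i) * r j)
          + b i * ∑ j ∈ Finset.univ.filter (fun j => b i < x j), r j := by
      rw [Finset.mul_sum, ← Finset.sum_add_distrib]
      refine Finset.sum_congr rfl fun j _ => by ring
    rw [h2, h1, hP i, mul_zero, add_zero]
  -- membership in the cell
  have hmem : ∀ j, j ∈ C ↔ (b k < x j ∧ ∀ h : (k : ℕ) + 1 < n, x j ≤ b ⟨(k : ℕ) + 1, h⟩) := by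
    intro j; simp [hC, hinCell]
  -- cell sums vanish for any g with vanishing half-line sums
  have hcell : ∀ g : Fin m → ℝ,
      (∀ i : Fin n, ∑ j ∈ Finset.univ.filter (fun j => b i < x j), g j = 0) →
      ∑ j ∈ C, g j = 0 := by
    intro g hg
    by_cases h : (k : ℕ) + 1 < n
    · set k' : Fin n := ⟨(k : ℕ) + 1, h⟩ with hk'
      have hsub : Finset.univ.filter (fun j => b k' < x j)
          ⊆ Finset.univ.filter (fun j => b k < x j) := by
        intro j hj
        simp only [Finset.mem_filter, Finset.mem_univ, true_and] at hj ⊢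
        exact lt_of_le_of_lt (hb (by exact Fin.le_def.mpr (Nat.le_succ _))) hj
      have hCeq : C = Finset.univ.filter (fun j => b k < x j)
          \ Finset.univ.filter (fun j => b k' < x j) := by
        ext j
        simp only [hmem, Finset.mem_sdiff, Finset.mem_filter, Finset.mem_univ, true_and,
          not_lt]
        constructor
        · rintro ⟨h1, h2⟩; exact ⟨h1, h2 h⟩
        · rintro ⟨h1, h2⟩; exact ⟨h1, fun _ => h2⟩
      rw [hCeq, Finset.sum_sdiff_eq_sub hsub, hg, hg, sub_zero]
    · have hCeq : C = Finset.univ.filter (fun j => b k < x j) := by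
        ext j
        simp only [hmem, Finset.mem_filter, Finset.mem_univ, true_and]
        constructor
        · rintro ⟨h1, _⟩; exact h1
        · intro h1; exact ⟨h1, fun h' => absurd h' h⟩
      rw [hCeq, hg]
  have hr0 : ∑ j ∈ C, r j = 0 := hcell r hP
  have hr1 : ∑ j ∈ C, x j * r j = 0 := hcell (fun j => x j * r j) hQ
  -- f is affine on the cell
  set S : ℝ := ∑ i ∈ Finset.univ.filter (fun i : Fin n => i ≤ k), c i with hS
  set T : ℝ := ∑ i ∈ Finset.univ.filter (fun i : Fin n => i ≤ k), c i * b i with hT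
  have hfc : ∀ j ∈ C, f (x j) = S * x j - T := by
    intro j hj
    obtain ⟨hj1, hj2⟩ := (hmem j).mp hj
    rw [hf]
    rw [← Finset.sum_filter_add_sum_filter_not Finset.univ (fun i : Fin n => i ≤ k)]
    have hzero : ∑ i ∈ Finset.univ.filter (fun i : Fin n => ¬ i ≤ k),
        c i * max (x j - b i) 0 = 0 := by
      refine Finset.sum_eq_zero fun i hi => ?_
      simp only [Finset.mem_filter, Finset.mem_univ, true_and, not_le] at hi
      have hin : (k : ℕ) + 1 < n := lt_of_le_of_lt (Nat.succ_le_of_lt hi) i.isLt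
      have hle : x j ≤ b i := by
        refine le_trans (hj2 hin) (hb ?_)
        exact Fin.le_def.mpr (Nat.succ_le_of_lt hi)
      rw [max_eq_right (sub_nonpos.mpr hle), mul_zero]
    rw [hzero, add_zero]
    have hmax : ∀ i ∈ Finset.univ.filter (fun i : Fin n => i ≤ k),
        c i * max (x j - b i) 0 = c i * x j - c i * b i := by
      intro i hi
      simp only [Finset.mem_filter, Finset.mem_univ, true_and] at hi
      have : b i ≤ b k := hb hi
      rw [max_eq_left (sub_nonneg.mpr (le_of_lt (lt_of_le_of_lt this hj1)))]
      ring
    rw [Finset.sum_congr rfl hmax, Finset.sum_sub_distrib, ← Finset.sum_mul, hS, hT]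
  -- abbreviations
  set Sx : ℝ := ∑ j ∈ C, x j with hSx
  set Sy : ℝ := ∑ j ∈ C, y j with hSy
  set Sxx : ℝ := ∑ j ∈ C, (x j) ^ 2 with hSxx
  set Sxy : ℝ := ∑ j ∈ C, x j * y j with hSxy
  have hun : (u k : ℝ) ≠ 0 := by
    have : (0:ℕ) < u k := lt_of_lt_of_le (by norm_num) hk
    exact_mod_cast this.ne'
  have hcard : (C.card : ℝ) = (u k : ℝ) := by exact_mod_cast (hu k).symm
  -- the two normal equations
  have eq1 : S * Sx - (u k : ℝ) * T - Sy = 0 := by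
    have : ∑ j ∈ C, r j = ∑ j ∈ C, (S * x j - T - y j) := by
      refine Finset.sum_congr rfl fun j hj => ?_
      simp [hr, hfc j hj]
    rw [this] at hr0
    have expand : ∑ j ∈ C, (S * x j - T - y j)
        = S * Sx - (C.card : ℝ) * T - Sy := by
      simp [Finset.sum_sub_distrib, Finset.mul_sum, hSx, hSy, Finset.sum_const,
        nsmul_eq_mul]
    rw [expand, hcard] at hr0
    exact hr0
  have eq2 : S * Sxx - T * Sx - Sxy = 0 := by
    have : ∑ j ∈ C, x j * r j = ∑ j ∈ C, (S * (x j)^2 - T * x j - x j * y j) := by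
      refine Finset.sum_congr rfl fun j hj => ?_
      simp only [hr, hfc j hj]
      ring
    rw [this] at hr1
    have expand : ∑ j ∈ C, (S * (x j)^2 - T * x j - x j * y j)
        = S * Sxx - T * Sx - Sxy := by
      simp [Finset.sum_sub_distrib, Finset.mul_sum, hSx, hSxx, hSxy]
    rw [expand] at hr1
    exact hr1
  -- variance positivity
  have hμk : μ k = Sx / (u k : ℝ) := hμ k
  have hvar : 0 < ∑ j ∈ C, (x j - μ k) ^ 2 := by
    have h2 : 1 < C.card := by have h3 := hu k; rw [← hC] at h3; omega
    obtain ⟨j1, hj1, j2, hj2, hne⟩ := Finset.one_lt_card.mp h2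
    have hxne : x j1 ≠ x j2 := fun h => hne (hx.injective h)
    have key : x j1 ≠ μ k ∨ x j2 ≠ μ k := by
      by_contra h; push_neg at h; exact hxne (h.1.trans h.2.symm)
    refine Finset.sum_pos' (fun j _ => sq_nonneg _) ?_
    rcases key with h | h
    · exact ⟨j1, hj1, lt_of_le_of_ne (sq_nonneg _) (Ne.symm (pow_ne_zero 2 (sub_ne_zero.mpr h)))⟩
    · exact ⟨j2, hj2, lt_of_le_of_ne (sq_nonneg _) (Ne.symm (pow_ne_zero 2 (sub_ne_zero.mpr h)))⟩
  have hvar_eq : ∑ j ∈ C, (x j - μ k) ^ 2 = Sxx - (u k : ℝ) * (μ k) ^ 2 := by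
    have hSxμ : Sx = (u k : ℝ) * μ k := by
      rw [hμk]; field_simp
    have : ∑ j ∈ C, (x j - μ k) ^ 2
        = Sxx - 2 * μ k * Sx + (C.card : ℝ) * (μ k)^2 := by
      calc ∑ j ∈ C, (x j - μ k) ^ 2
          = ∑ j ∈ C, ((x j)^2 - 2 * μ k * x j + (μ k)^2) :=
            Finset.sum_congr rfl fun j _ => by ring
        _ = Sxx - 2 * μ k * Sx + (C.card : ℝ) * (μ k)^2 := by
            rw [Finset.sum_add_distrib, Finset.sum_sub_distrib, Finset.sum_const,
              nsmul_eq_mul, ← Finset.mul_sum, hSx, hSxx]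
    rw [this, hcard, hSxμ]; ring
  have hσpos : 0 < σsq k := by
    have hupos : (0:ℝ) < (u k : ℝ) := lt_of_le_of_ne (Nat.cast_nonneg _) (Ne.symm hun)
    have : σsq k = (∑ j ∈ C, (x j - μ k) ^ 2) / (u k : ℝ) := by
      rw [hσsq k, hvar_eq]
      field_simp
      rfl
    rw [this]
    exact div_pos hvar hupos
  have hσne : σsq k ≠ 0 := ne_of_gt hσpos
  -- conclude
  rw [eq_div_iff hσne, hσsq k, hμ k, hybar k]
  rw [← hC, ← hSx, ← hSy, ← hSxx, ← hSxy] at *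
  field_simp
  linear_combination ((u k : ℝ) * eq2 - Sx * eq1)
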